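/- arXiv:2503.22090 — 2 statements merged into one kernel-verified Lean document; each statement's English description precedes it below -/
import Mathlib

section
/- Let l > 0, (a, M) subextremal Kerr–de Sitter parameters, Ξ = 1 + a²/l², and consider a superradiant frequency (ω, m) with ω = amΞ/(r_s² + a²), r_s ∈ (r₊, r̄₊). Then the function 𝒯(ω, m, r) = ((r² + a²)²/Δ(r))·(ω - amΞ/(r² + a²))² has exactly one critical point in (r₊, r̄₊), located at r = r_s, which is a minimum with 𝒯(ω, m, r_s) = 0; moreover the second derivative of 𝒯 at r_s is strictly positive. -/
private lemma cubic4 (c3 c2 c1 c0 x1 x2 x3 x4 : ℝ)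
    (h12 : x1 < x2) (h23 : x2 < x3) (h34 : x3 < x4)
    (e1 : c3*x1^3 + c2*x1^2 + c1*x1 + c0 = 0)
    (e2 : c3*x2^3 + c2*x2^2 + c1*x2 + c0 = 0)
    (e3 : c3*x3^3 + c2*x3^2 + c1*x3 + c0 = 0)
    (e4 : c3*x4^3 + c2*x4^2 + c1*x4 + c0 = 0) :
    c3 = 0 ∧ c2 = 0 ∧ c1 = 0 ∧ c0 = 0 := by
  have n12 : x1 - x2 ≠ 0 := sub_ne_zero.mpr (ne_of_lt h12)
  have n23 : x2 - x3 ≠ 0 := sub_ne_zero.mpr (ne_of_lt h23)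
  have n34 : x3 - x4 ≠ 0 := sub_ne_zero.mpr (ne_of_lt h34)
  have n13 : x1 - x3 ≠ 0 := sub_ne_zero.mpr (ne_of_lt (lt_trans h12 h23))
  have n24 : x2 - x4 ≠ 0 := sub_ne_zero.mpr (ne_of_lt (lt_trans h23 h34))
  have n14 : x1 - x4 ≠ 0 := sub_ne_zero.mpr (ne_of_lt (lt_trans h12 (lt_trans h23 h34)))
  have d1 : c3*(x1^2+x1*x2+x2^2) + c2*(x1+x2) + c1 = 0 := by
    have h : (x1-x2) * (c3*(x1^2+x1*x2+x2^2) + c2*(x1+x2) + c1) = 0 := by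
      linear_combination e1 - e2
    exact (mul_eq_zero.mp h).resolve_left n12
  have d2 : c3*(x2^2+x2*x3+x3^2) + c2*(x2+x3) + c1 = 0 := by
    have h : (x2-x3) * (c3*(x2^2+x2*x3+x3^2) + c2*(x2+x3) + c1) = 0 := by
      linear_combination e2 - e3
    exact (mul_eq_zero.mp h).resolve_left n23
  have d3 : c3*(x3^2+x3*x4+x4^2) + c2*(x3+x4) + c1 = 0 := by
    have h : (x3-x4) * (c3*(x3^2+x3*x4+x4^2) + c2*(x3+x4) + c1) = 0 := by
      linear_combination e3 - e4
    exact (mul_eq_zero.mp h).resolve_left n34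
  have f1 : c3*(x1+x2+x3) + c2 = 0 := by
    have h : (x1-x3) * (c3*(x1+x2+x3) + c2) = 0 := by
      linear_combination d1 - d2
    exact (mul_eq_zero.mp h).resolve_left n13
  have f2 : c3*(x2+x3+x4) + c2 = 0 := by
    have h : (x2-x4) * (c3*(x2+x3+x4) + c2) = 0 := by
      linear_combination d2 - d3
    exact (mul_eq_zero.mp h).resolve_left n24
  have hc3 : c3 = 0 := by
    have h : (x1-x4) * c3 = 0 := by linear_combination f1 - f2
    exact (mul_eq_zero.mp h).resolve_left n14
  have hc2 : c2 = 0 := by linear_combination f1 - (x1+x2+x3)*hc3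
  have hc1 : c1 = 0 := by linear_combination d1 - (x1^2+x1*x2+x2^2)*hc3 - (x1+x2)*hc2
  have hc0 : c0 = 0 := by linear_combination e1 - x1^3*hc3 - x1^2*hc2 - x1*hc1
  exact ⟨hc3, hc2, hc1, hc0⟩

private lemma quartic_factor (l a M rbm rm rp rbp : ℝ)
    (h12 : rbm < rm) (h23 : rm < rp) (h34 : rp < rbp)
    (e1 : (rbm^2+a^2)*(1-rbm^2/l^2) - 2*M*rbm = 0)
    (e2 : (rm^2+a^2)*(1-rm^2/l^2) - 2*M*rm = 0)
    (e3 : (rp^2+a^2)*(1-rp^2/l^2) - 2*M*rp = 0)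
    (e4 : (rbp^2+a^2)*(1-rbp^2/l^2) - 2*M*rbp = 0) :
    (∀ r : ℝ, (r^2+a^2)*(1-r^2/l^2) - 2*M*r
        = -(1/l^2)*((r-rbm)*(r-rm)*(r-rp)*(r-rbp)))
    ∧ (∀ r : ℝ, 2*r*(1-r^2/l^2) + (r^2+a^2)*(-(2*r)/l^2) - 2*M
        = -(1/l^2)*((r-rm)*(r-rp)*(r-rbp) + (r-rbm)*(r-rp)*(r-rbp)
            + (r-rbm)*(r-rm)*(r-rbp) + (r-rbm)*(r-rm)*(r-rp))) := by
  have f1 : (-(rbm+rm+rp+rbp)/l^2)*rbm^3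
      + (1 - a^2/l^2 + (rbm*rm + rbm*rp + rbm*rbp + rm*rp + rm*rbp + rp*rbp)/l^2)*rbm^2
      + (-(2*M) - (rbm*rm*rp + rbm*rm*rbp + rbm*rp*rbp + rm*rp*rbp)/l^2)*rbm
      + (a^2 + rbm*rm*rp*rbp/l^2) = 0 := by linear_combination e1
  have f2 : (-(rbm+rm+rp+rbp)/l^2)*rm^3
      + (1 - a^2/l^2 + (rbm*rm + rbm*rp + rbm*rbp + rm*rp + rm*rbp + rp*rbp)/l^2)*rm^2
      + (-(2*M) - (rbm*rm*rp + rbm*rm*rbp + rbm*rp*rbp + rm*rp*rbp)/l^2)*rm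
      + (a^2 + rbm*rm*rp*rbp/l^2) = 0 := by linear_combination e2
  have f3 : (-(rbm+rm+rp+rbp)/l^2)*rp^3
      + (1 - a^2/l^2 + (rbm*rm + rbm*rp + rbm*rbp + rm*rp + rm*rbp + rp*rbp)/l^2)*rp^2
      + (-(2*M) - (rbm*rm*rp + rbm*rm*rbp + rbm*rp*rbp + rm*rp*rbp)/l^2)*rp
      + (a^2 + rbm*rm*rp*rbp/l^2) = 0 := by linear_combination e3
  have f4 : (-(rbm+rm+rp+rbp)/l^2)*rbp^3
      + (1 - a^2/l^2 + (rbm*rm + rbm*rp + rbm*rbp + rm*rp + rm*rbp + rp*rbp)/l^2)*rbp^2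
      + (-(2*M) - (rbm*rm*rp + rbm*rm*rbp + rbm*rp*rbp + rm*rp*rbp)/l^2)*rbp
      + (a^2 + rbm*rm*rp*rbp/l^2) = 0 := by linear_combination e4
  obtain ⟨hc3, hc2, hc1, hc0⟩ := cubic4 _ _ _ _ rbm rm rp rbp h12 h23 h34 f1 f2 f3 f4
  constructor
  · intro r
    linear_combination r^3*hc3 + r^2*hc2 + r*hc1 + hc0
  · intro r
    linear_combination 3*r^2*hc3 + 2*r*hc2 + hc1
set_option maxHeartbeats 1000000 in
/-- For superradiant frequencies, `𝒯` has a unique critical point in `(r₊, r̄₊)`,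
located at `r_s`, which is a minimum with `𝒯 = 0` there, and with strictly positive
second derivative at `r_s`. -/
theorem T_unique_critical_point_superradiant (l a M : ℝ) (hl : 0 < l) (hM : 0 < M)
    (Δ : ℝ → ℝ) (hΔ : ∀ r, Δ r = (r ^ 2 + a ^ 2) * (1 - r ^ 2 / l ^ 2) - 2 * M * r)
    (rbm rm rp rbp : ℝ)
    (horder : rbm < 0 ∧ 0 ≤ rm ∧ rm < rp ∧ rp < rbp)
    (hroots : Δ rbm = 0 ∧ Δ rm = 0 ∧ Δ rp = 0 ∧ Δ rbp = 0)
    (hall : ∀ r, Δ r = 0 → r = rbm ∨ r = rm ∨ r = rp ∨ r = rbp)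
    (Ξ : ℝ) (hΞ : Ξ = 1 + a ^ 2 / l ^ 2) (ω : ℝ) (m : ℤ)
    (hsr : a * (m : ℝ) * ω ∈
      Set.Ioo (a ^ 2 * (m : ℝ) ^ 2 * Ξ / (rbp ^ 2 + a ^ 2))
        (a ^ 2 * (m : ℝ) ^ 2 * Ξ / (rp ^ 2 + a ^ 2)))
    (rs : ℝ) (hrs : rs ∈ Set.Ioo rp rbp)
    (hωrs : ω = a * (m : ℝ) * Ξ / (rs ^ 2 + a ^ 2))
    (T : ℝ → ℝ)
    (hT : ∀ r, T r =
      (r ^ 2 + a ^ 2) ^ 2 / Δ r * (ω - a * (m : ℝ) * Ξ / (r ^ 2 + a ^ 2)) ^ 2) :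
    (∀ r ∈ Set.Ioo rp rbp, deriv T r = 0 ↔ r = rs) ∧
    T rs = 0 ∧
    (∀ r ∈ Set.Ioo rp rbp, r ≠ rs → 0 < T r) ∧
    0 < deriv (deriv T) rs := by
  obtain ⟨hbm, hm0, hmp, hpb⟩ := horder
  obtain ⟨hrt1, hrt2, hrt3, hrt4⟩ := hroots
  obtain ⟨hsp, hrsb⟩ := hrs
  obtain ⟨hsr1, hsr2⟩ := hsr
  have hrp0 : 0 < rp := lt_of_le_of_lt hm0 hmp
  have hrs0 : 0 < rs := lt_trans hrp0 hsp
  have hΞpos : 0 < Ξ := by rw [hΞ]; positivity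
  -- the factorization of Δ and of its derivative
  have hroot' : ∀ x : ℝ, Δ x = 0 → (x^2+a^2)*(1-x^2/l^2) - 2*M*x = 0 := by
    intro x hx
    have h := hΔ x
    rw [hx] at h
    linear_combination -h
  obtain ⟨hfac0, hDpfac0⟩ := quartic_factor l a M rbm rm rp rbp
    (by linarith) hmp hpb (hroot' rbm hrt1) (hroot' rm hrt2) (hroot' rp hrt3)
    (hroot' rbp hrt4)
  have hfac : ∀ x : ℝ, Δ x = -(1/l^2)*((x-rbm)*(x-rm)*(x-rp)*(x-rbp)) := by
    intro x
    rw [hΔ x]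
    linear_combination hfac0 x
  -- Δ is positive on the interval
  have hΔpos : ∀ x ∈ Set.Ioo rp rbp, 0 < Δ x := by
    intro x hx
    obtain ⟨hx1, hx2⟩ := hx
    have h : Δ x = (1/l^2)*((x-rbm)*(x-rm)*(x-rp)*(rbp-x)) := by
      linear_combination hfac x
    rw [h]
    have h1 : 0 < x - rbm := by linarith
    have h2 : 0 < x - rm := by linarith
    have h3 : 0 < x - rp := by linarith
    have h4 : 0 < rbp - x := by linarith
    have h5 : (0:ℝ) < 1/l^2 := by positivity
    exact mul_pos h5 (mul_pos (mul_pos (mul_pos h1 h2) h3) h4)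
  -- derivative of Δ
  have hΔd : ∀ x : ℝ, HasDerivAt Δ
      (2*x*(1-x^2/l^2) + (x^2+a^2)*(-(2*x)/l^2) - 2*M) x := by
    intro x
    have h1 : HasDerivAt (fun r : ℝ => r^2 + a^2) (2*x) x := by
      simpa using (hasDerivAt_pow 2 x).add_const (a^2)
    have h2 : HasDerivAt (fun r : ℝ => 1 - r^2/l^2) (-(2*x)/l^2) x := by
      have := ((hasDerivAt_pow 2 x).div_const (l^2)).const_sub 1
      refine this.congr_deriv ?_
      norm_num
      ring
    have h3 : HasDerivAt (fun r : ℝ => 2*M*r) (2*M) x := by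
      simpa using (hasDerivAt_id x).const_mul (2*M)
    have h4 := (h1.mul h2).sub h3
    have h5 : Δ = fun r : ℝ => (r^2+a^2)*(1-r^2/l^2) - 2*M*r := by
      funext r; rw [hΔ r]
    rw [h5]
    exact h4
  have hDpfac : ∀ x : ℝ, 2*x*(1-x^2/l^2) + (x^2+a^2)*(-(2*x)/l^2) - 2*M
      = -(1/l^2)*((x-rm)*(x-rp)*(x-rbp) + (x-rbm)*(x-rp)*(x-rbp)
          + (x-rbm)*(x-rm)*(x-rbp) + (x-rbm)*(x-rm)*(x-rp)) := hDpfac0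
  -- positivity of h(r) = 4 r Δ - (r²-rs²) Δ'
  have hhpos : ∀ x ∈ Set.Ioo rp rbp,
      0 < 4*x*Δ x - (x^2-rs^2)*(2*x*(1-x^2/l^2) + (x^2+a^2)*(-(2*x)/l^2) - 2*M) := by
    intro x hx
    obtain ⟨hx1, hx2⟩ := hx
    have hx0 : 0 < x := lt_trans hrp0 hx1
    have hl2 : (0:ℝ) < 1/l^2 := by positivity
    have hfx := hfac x
    have hdx := hDpfac x
    rcases lt_trichotomy x rs with hlt | heq | hgt
    · have key : 4*x*Δ x - (x^2-rs^2)*(2*x*(1-x^2/l^2) + (x^2+a^2)*(-(2*x)/l^2) - 2*M)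
          = (1/l^2)*((rs-x)*(x+rs)*(rbp-x)*(x-rm)*(x-rp)
            + (rs-x)*(rbp-x)*(x-rbm)*(x-rp)*(rs+rm)
            + (rs-x)*(rbp-x)*(x-rbm)*(x-rm)*(rs+rp)
            + (x+rs)*(x-rbm)*(x-rm)*(x-rp)*(rbp-rs)
            + (x+rs)*(rbp-x)*(x-rbm)*(x-rm)*(x-rp)) := by
        linear_combination (4*x)*hfx - (x^2-rs^2)*hdx
      rw [key]
      have p1 : 0 < rs - x := by linarith
      have p2 : 0 < x + rs := by linarith
      have p3 : 0 < rbp - x := by linarith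
      have p4 : 0 < x - rm := by linarith
      have p5 : 0 < x - rp := by linarith
      have p6 : 0 < x - rbm := by linarith
      have p7 : 0 < rs + rm := by linarith
      have p8 : 0 < rs + rp := by linarith
      have p9 : 0 < rbp - rs := by linarith
      exact mul_pos hl2 (add_pos (add_pos (add_pos (add_pos
        (mul_pos (mul_pos (mul_pos (mul_pos p1 p2) p3) p4) p5)
        (mul_pos (mul_pos (mul_pos (mul_pos p1 p3) p6) p5) p7))
        (mul_pos (mul_pos (mul_pos (mul_pos p1 p3) p6) p4) p8))
        (mul_pos (mul_pos (mul_pos (mul_pos p2 p6) p4) p5) p9))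
        (mul_pos (mul_pos (mul_pos (mul_pos p2 p3) p6) p4) p5))
    · subst heq
      have hΔx := hΔpos x ⟨hx1, hx2⟩
      have h0 : x^2 - x^2 = 0 := sub_self _
      rw [h0, zero_mul, sub_zero]
      exact mul_pos (by linarith : (0:ℝ) < 4*x) hΔx
    · have key : 4*x*Δ x - (x^2-rs^2)*(2*x*(1-x^2/l^2) + (x^2+a^2)*(-(2*x)/l^2) - 2*M)
          = (1/l^2)*((x+rs)*(x-rbm)*(rbp-x)*((rs-rm)*(x-rp)+(rs-rp)*(x-rm))
            + (x-rs)*(x-rm)*(x-rp)*(rbp-x)*(x-rs-2*rbm)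
            + (x-rs)*(x+rs)*(x-rbm)*(x-rm)*(x-rp)) := by
        linear_combination (4*x)*hfx - (x^2-rs^2)*hdx
      rw [key]
      have p1 : 0 < x + rs := by linarith
      have p2 : 0 < x - rbm := by linarith
      have p3 : 0 < rbp - x := by linarith
      have p4 : 0 < rs - rm := by linarith
      have p5 : 0 < x - rp := by linarith
      have p6 : 0 < rs - rp := by linarith
      have p7 : 0 < x - rm := by linarith
      have p8 : 0 < x - rs := by linarith
      have p9 : 0 < x - rs - 2*rbm := by linarith
      exact mul_pos hl2 (add_pos (add_pos
        (mul_pos (mul_pos (mul_pos p1 p2) p3) (add_pos (mul_pos p4 p5) (mul_pos p6 p7)))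
        (mul_pos (mul_pos (mul_pos (mul_pos p8 p7) p5) p3) p9))
        (mul_pos (mul_pos (mul_pos (mul_pos p8 p1) p2) p7) p5))
  -- a*m ≠ 0
  have ham : a * (m:ℝ) ≠ 0 := by
    intro h
    have h0 : a^2*(m:ℝ)^2*Ξ = 0 := by
      have : a^2*(m:ℝ)^2*Ξ = (a*(m:ℝ))^2*Ξ := by ring
      rw [this, h]; ring
    rw [h0, zero_div] at hsr1
    have h1 : a * (m:ℝ) * ω = 0 := by rw [h, zero_mul]
    rw [h1] at hsr1
    exact lt_irrefl 0 hsr1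
  have hA : 0 < rs^2 + a^2 := by positivity
  have hkne : a*(m:ℝ)*Ξ ≠ 0 := mul_ne_zero ham (ne_of_gt hΞpos)
  set Ck : ℝ := (a*(m:ℝ)*Ξ)^2/(rs^2+a^2)^2 with hCk
  have hCpos : 0 < Ck := by
    rw [hCk]
    exact div_pos (pow_two_pos_of_ne_zero hkne) (by positivity)
  -- T agrees with the normal form on the interval
  have hTF : ∀ y ∈ Set.Ioo rp rbp, T y = Ck * (y^2 - rs^2)^2 / Δ y := by
    intro y hy
    have hy0 : 0 < y := lt_trans hrp0 hy.1
    have h1 : Δ y ≠ 0 := (hΔpos y hy).ne'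
    have h2 : y^2 + a^2 ≠ 0 := by positivity
    have h3 : rs^2 + a^2 ≠ 0 := hA.ne'
    rw [hT y, hωrs, hCk]
    field_simp
    ring
  -- formula for deriv T on the interval
  have hderiv : ∀ x ∈ Set.Ioo rp rbp, deriv T x
      = Ck * ((x^2-rs^2)*(4*x*Δ x - (x^2-rs^2)*(2*x*(1-x^2/l^2) + (x^2+a^2)*(-(2*x)/l^2) - 2*M)))/(Δ x)^2 := by
    intro x hx
    have hΔx : Δ x ≠ 0 := (hΔpos x hx).ne'
    have hnum : HasDerivAt (fun y : ℝ => Ck * (y^2 - rs^2)^2)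
        (Ck * (2*(x^2-rs^2)*(2*x))) x := by
      have h := (((hasDerivAt_pow 2 x).sub_const (rs^2)).pow 2).const_mul Ck
      refine h.congr_deriv ?_
      norm_num
    have hd := hnum.div (hΔd x) hΔx
    have hev : T =ᶠ[nhds x] (fun y => Ck * (y^2 - rs^2)^2 / Δ y) :=
      Filter.eventuallyEq_of_mem (isOpen_Ioo.mem_nhds hx) (fun y hy => hTF y hy)
    rw [hev.deriv_eq, show (fun y => Ck * (y^2 - rs^2)^2 / Δ y) = (fun y => Ck * (y^2 - rs^2)^2) / Δ from rfl, hd.deriv]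
    ring
  refine ⟨?_, ?_, ?_, ?_⟩
  · -- unique critical point
    intro x hx
    have hx0 : 0 < x := lt_trans hrp0 hx.1
    have hΔx := hΔpos x hx
    have hh := hhpos x hx
    constructor
    · intro h0
      rw [hderiv x hx] at h0
      have h9 := (div_eq_zero_iff.mp h0).resolve_right (by positivity)
      have h10 := (mul_eq_zero.mp h9).resolve_left hCpos.ne'
      have h11 := (mul_eq_zero.mp h10).resolve_right hh.ne'
      have h12 : (x - rs)*(x + rs) = 0 := by linear_combination h11
      rcases mul_eq_zero.mp h12 with h | h
      · linarith [sub_eq_zero.mp h]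
      · linarith
    · intro h
      subst h
      rw [hderiv x hx]
      simp
  · -- T rs = 0
    rw [hT rs, hωrs]
    simp
  · -- positivity away from rs
    intro x hx hne
    have hx0 : 0 < x := lt_trans hrp0 hx.1
    rw [hTF x hx]
    have h1 : x^2 - rs^2 ≠ 0 := by
      intro h
      have h12 : (x - rs)*(x + rs) = 0 := by linear_combination h
      rcases mul_eq_zero.mp h12 with h | h
      · exact hne (sub_eq_zero.mp h)
      · linarith
    exact div_pos (mul_pos hCpos (pow_two_pos_of_ne_zero h1)) (hΔpos x hx)
  · -- second derivative positive
    have hrsIoo : rs ∈ Set.Ioo rp rbp := ⟨hsp, hrsb⟩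
    have hΔrs := hΔpos rs hrsIoo
    have hev2 : deriv T =ᶠ[nhds rs]
        (fun y => Ck * ((y^2-rs^2)*(4*y*Δ y - (y^2-rs^2)*(2*y*(1-y^2/l^2) + (y^2+a^2)*(-(2*y)/l^2) - 2*M)))/(Δ y)^2) :=
      Filter.eventuallyEq_of_mem (isOpen_Ioo.mem_nhds hrsIoo) (fun y hy => hderiv y hy)
    have hd1 : HasDerivAt (fun y : ℝ => y^2 - rs^2) (2*rs) rs := by
      simpa using (hasDerivAt_pow 2 rs).sub_const (rs^2)
    have ha1 : HasDerivAt (fun y : ℝ => 2*y) 2 rs := by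
      simpa using (hasDerivAt_id rs).const_mul 2
    have ha2 : HasDerivAt (fun y : ℝ => 1 - y^2/l^2) (-(2*rs)/l^2) rs := by
      have := ((hasDerivAt_pow 2 rs).div_const (l^2)).const_sub 1
      refine this.congr_deriv ?_
      norm_num
      ring
    have ha3 : HasDerivAt (fun y : ℝ => y^2 + a^2) (2*rs) rs := by
      simpa using (hasDerivAt_pow 2 rs).add_const (a^2)
    have ha4 : HasDerivAt (fun y : ℝ => -(2*y)/l^2) (-2/l^2) rs := by
      have := (((hasDerivAt_id rs).const_mul 2).neg).div_const (l^2)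
      refine this.congr_deriv ?_
      norm_num
    have hDp2 := ((ha1.mul ha2).add (ha3.mul ha4)).sub_const (2*M)
    have hb1 : HasDerivAt (fun y : ℝ => 4*y) 4 rs := by
      simpa using (hasDerivAt_id rs).const_mul 4
    have hb2 := hb1.mul (hΔd rs)
    have hb3 := hd1.mul hDp2
    have hHd := hb2.sub hb3
    have hGd := hd1.mul hHd
    have hnum := hGd.const_mul Ck
    have hden := (hΔd rs).pow 2
    have hF1d := hnum.div hden (pow_ne_zero 2 hΔrs.ne')
    have hfin : HasDerivAt
        (fun y => Ck * ((y^2-rs^2)*(4*y*Δ y - (y^2-rs^2)*(2*y*(1-y^2/l^2) + (y^2+a^2)*(-(2*y)/l^2) - 2*M)))/(Δ y)^2)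
        (8*Ck*rs^2/Δ rs) rs := by
      refine hF1d.congr_deriv ?_
      have hne : Δ rs ≠ 0 := hΔrs.ne'
      simp only [Pi.mul_apply, Pi.sub_apply, Pi.add_apply, Pi.pow_apply, Nat.cast_ofNat]
      field_simp
      ring
    rw [hev2.deriv_eq, hfin.deriv]
    exact div_pos (by positivity) hΔrs
end

section
/- Let u : ℝ → ℂ be C¹ with u and u' bounded, satisfying the outgoing boundary conditions lim_{r*→-∞}(u'(r*) + i(ω - ω₊m)u(r*)) = 0 and lim_{r*→+∞}(u'(r*) - i(ω - ω̄₊m)u(r*)) = 0, and suppose u is a classical solution of u'' + (ω² - V)u = H on ℝ with V real, such that all integrals below converge and |u|²(±∞) := lim_{r*→±∞}|u|²(r*) exist. Then (ω - ω̄₊m)|u|²(+∞) + (ω - ω₊m)|u|²(-∞) = Im ∫_ℝ ū H dr*. -/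
open Filter

open MeasureTheory in
/-- Energy identity for outgoing solutions of Carter's radial ODE:
`(ω - ω̄₊m)|u|²(+∞) + (ω - ω₊m)|u|²(-∞) = Im ∫ ū H`. -/
theorem energy_identity_outgoing (ω ωp ωbp : ℝ) (m : ℤ)
    (V : ℝ → ℝ) (u H : ℝ → ℂ)
    (hu : ContDiff ℝ 2 u)
    (hbd : ∃ C : ℝ, ∀ x, ‖u x‖ ≤ C ∧ ‖deriv u x‖ ≤ C)
    (hout_neg : Filter.Tendsto
      (fun x => deriv u x + Complex.I * ((ω - ωp * (m : ℝ) : ℝ) : ℂ) * u x)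
      Filter.atBot (nhds 0))
    (hout_pos : Filter.Tendsto
      (fun x => deriv u x - Complex.I * ((ω - ωbp * (m : ℝ) : ℝ) : ℂ) * u x)
      Filter.atTop (nhds 0))
    (hode : ∀ x, deriv (deriv u) x + ((ω : ℂ) ^ 2 - (V x : ℂ)) * u x = H x)
    (hint : Integrable (fun x => (starRingEnd ℂ) (u x) * H x))
    (Lneg Lpos : ℝ)
    (hLneg : Filter.Tendsto (fun x => ‖u x‖ ^ 2) Filter.atBot (nhds Lneg))
    (hLpos : Filter.Tendsto (fun x => ‖u x‖ ^ 2) Filter.atTop (nhds Lpos)) :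
    (ω - ωbp * (m : ℝ)) * Lpos + (ω - ωp * (m : ℝ)) * Lneg =
      (∫ x, (starRingEnd ℂ) (u x) * H x).im := by
  obtain ⟨C, hC⟩ := hbd
  set c : ℝ := ω - ωbp * (m : ℝ) with hc
  set c' : ℝ := ω - ωp * (m : ℝ) with hc'
  have hu1 : Differentiable ℝ u := hu.differentiable (by norm_num)
  have hu2 : Differentiable ℝ (deriv u) := by
    have := (contDiff_succ_iff_deriv (n := 1)).mp (by exact_mod_cast hu)
    exact this.2.2.differentiable (by norm_num)
  set g : ℝ → ℝ := fun x => ((starRingEnd ℂ) (u x) * deriv u x).im with hg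
  have hder : ∀ x, HasDerivAt g ((starRingEnd ℂ) (u x) * H x).im x := by
    intro x
    have h1 : HasDerivAt (fun x => (starRingEnd ℂ) (u x) * deriv u x)
        ((starRingEnd ℂ) (deriv u x) * deriv u x
          + (starRingEnd ℂ) (u x) * deriv (deriv u) x) x :=
      ((hu1 x).hasDerivAt.star).mul (hu2 x).hasDerivAt
    have h2 := (Complex.imCLM.hasFDerivAt.comp_hasDerivAt x h1)
    have key : (((starRingEnd ℂ) (deriv u x) * deriv u x
          + (starRingEnd ℂ) (u x) * deriv (deriv u) x)).im
        = ((starRingEnd ℂ) (u x) * H x).im := by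
      have hxx : deriv (deriv u) x = H x - ((ω : ℂ) ^ 2 - (V x : ℂ)) * u x := by
        linear_combination hode x
      rw [hxx]
      have e1 : ((starRingEnd ℂ) (deriv u x) * deriv u x).im = 0 := by
        rw [← Complex.normSq_eq_conj_mul_self, Complex.ofReal_im]
      have h3 : ((starRingEnd ℂ) (u x) * (((ω : ℂ) ^ 2 - (V x : ℂ)) * u x)).im = 0 := by
        have e2 : (starRingEnd ℂ) (u x) * (((ω : ℂ) ^ 2 - (V x : ℂ)) * u x)
            = ((ω ^ 2 - V x : ℝ) : ℂ) * ((Complex.normSq (u x) : ℝ) : ℂ) := by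
          rw [Complex.normSq_eq_conj_mul_self]; push_cast; ring
        rw [e2, ← Complex.ofReal_mul, Complex.ofReal_im]
      rw [Complex.add_im, e1, zero_add, mul_sub, Complex.sub_im, h3, sub_zero]
    rw [← key]
    exact h2
  have hint' : Integrable (fun x => ((starRingEnd ℂ) (u x) * H x).im) := hint.im
  -- splitting lemma
  have hsq : ∀ x, ((starRingEnd ℂ) (u x) * u x) = ((‖u x‖ ^ 2 : ℝ) : ℂ) := by
    intro x
    rw [← Complex.normSq_eq_conj_mul_self, Complex.normSq_eq_norm_sq]
  have hImI : ∀ (r s : ℝ), (Complex.I * (r : ℂ) * ((s : ℝ) : ℂ)).im = r * s := by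
    intro r s; simp [Complex.mul_im]
  -- limit at +∞
  have htop : Tendsto g atTop (nhds (c * Lpos)) := by
    have hsplit : ∀ x, g x = c * ‖u x‖ ^ 2
        + ((starRingEnd ℂ) (u x) * (deriv u x - Complex.I * (c : ℂ) * u x)).im := by
      intro x
      have h1 : (starRingEnd ℂ) (u x) * deriv u x
          = Complex.I * (c : ℂ) * ((starRingEnd ℂ) (u x) * u x)
            + (starRingEnd ℂ) (u x) * (deriv u x - Complex.I * (c : ℂ) * u x) := by ring
      show ((starRingEnd ℂ) (u x) * deriv u x).im = _
      rw [h1, Complex.add_im, hsq x, hImI]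
    have h2 : Tendsto (fun x =>
        ((starRingEnd ℂ) (u x) * (deriv u x - Complex.I * (c : ℂ) * u x)).im)
        atTop (nhds 0) := by
      have hb : Tendsto (fun x => C * ‖deriv u x - Complex.I * (c : ℂ) * u x‖)
          atTop (nhds 0) := by
        simpa using (hout_pos.norm).const_mul C
      refine squeeze_zero_norm (fun x => ?_) hb
      calc ‖((starRingEnd ℂ) (u x) * (deriv u x - Complex.I * (c : ℂ) * u x)).im‖
          ≤ ‖(starRingEnd ℂ) (u x) * (deriv u x - Complex.I * (c : ℂ) * u x)‖ := by
            rw [Real.norm_eq_abs]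
            exact Complex.abs_im_le_norm _
        _ = ‖u x‖ * ‖deriv u x - Complex.I * (c : ℂ) * u x‖ := by
            rw [norm_mul, RCLike.norm_conj]
        _ ≤ C * ‖deriv u x - Complex.I * (c : ℂ) * u x‖ :=
            mul_le_mul_of_nonneg_right (hC x).1 (norm_nonneg _)
    have := (hLpos.const_mul c).add h2
    rw [add_zero] at this
    exact this.congr (fun x => (hsplit x).symm)
  -- limit at -∞
  have hbot : Tendsto g atBot (nhds (-(c' * Lneg))) := by
    have hsplit : ∀ x, g x = -(c' * ‖u x‖ ^ 2)
        + ((starRingEnd ℂ) (u x) * (deriv u x + Complex.I * (c' : ℂ) * u x)).im := by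
      intro x
      have h1 : (starRingEnd ℂ) (u x) * deriv u x
          = -(Complex.I * (c' : ℂ) * ((starRingEnd ℂ) (u x) * u x))
            + (starRingEnd ℂ) (u x) * (deriv u x + Complex.I * (c' : ℂ) * u x) := by ring
      show ((starRingEnd ℂ) (u x) * deriv u x).im = _
      rw [h1, Complex.add_im, hsq x, Complex.neg_im, hImI]
    have h2 : Tendsto (fun x =>
        ((starRingEnd ℂ) (u x) * (deriv u x + Complex.I * (c' : ℂ) * u x)).im)
        atBot (nhds 0) := by
      have hb : Tendsto (fun x => C * ‖deriv u x + Complex.I * (c' : ℂ) * u x‖)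
          atBot (nhds 0) := by
        simpa using (hout_neg.norm).const_mul C
      refine squeeze_zero_norm (fun x => ?_) hb
      calc ‖((starRingEnd ℂ) (u x) * (deriv u x + Complex.I * (c' : ℂ) * u x)).im‖
          ≤ ‖(starRingEnd ℂ) (u x) * (deriv u x + Complex.I * (c' : ℂ) * u x)‖ := by
            rw [Real.norm_eq_abs]
            exact Complex.abs_im_le_norm _
        _ = ‖u x‖ * ‖deriv u x + Complex.I * (c' : ℂ) * u x‖ := by
            rw [norm_mul, RCLike.norm_conj]
        _ ≤ C * ‖deriv u x + Complex.I * (c' : ℂ) * u x‖ :=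
            mul_le_mul_of_nonneg_right (hC x).1 (norm_nonneg _)
    have := ((hLneg.const_mul c').neg).add h2
    rw [add_zero] at this
    exact this.congr (fun x => (hsplit x).symm)
  have hFTC := integral_of_hasDerivAt_of_tendsto hder hint' hbot htop
  have him : (∫ x, (starRingEnd ℂ) (u x) * H x).im
      = ∫ x, ((starRingEnd ℂ) (u x) * H x).im := by
    simpa using (integral_im hint).symm
  rw [him, hFTC]
  ring
end
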